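/- Let n ≥ 1, let t_1,…,t_n be nonnegative real numbers with t_j = 0 for some fixed j, and let x = Σ_{i=1}^n t_i (e_i − e_{i+1}). Then L_{j+1}(x) ≤ L_m(x) for every m ∈ {1,…,n}; consequently h(x) = L_{j+1}(x), i.e. h is linear on the cone Π_j = {Σ_{i≠j} t_i (e_i − e_{i+1}) : t_i ≥ 0} (indices mod n). -/

import Mathlib

open Finset

/-- Cyclic successor in `Fin n` (so the index after `n` is `1`). -/
def csucc {n : ℕ} (x : Fin n) : Fin n :=
  ⟨(x.val + 1) % n, Nat.mod_lt _ (Nat.lt_of_le_of_lt (Nat.zero_le _) x.isLt)⟩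

/-- The linear functional `L_j(x) = Σ_{r=1}^{n−1} r·x_{j+r}` (subscripts mod `n`);
the `r = 0` term vanishes, so summing over all `r : Fin n` is the same. -/
def Lfun {n : ℕ} (j : Fin n) (x : Fin n → ℝ) : ℝ :=
  ∑ r : Fin n, (r.val : ℝ) * x (j + r)

/-- `h(x) = min_{1 ≤ j ≤ n} L_j(x)`. -/
noncomputable def hfun {n : ℕ} (x : Fin n → ℝ) : ℝ :=
  sInf (Set.range fun j : Fin n => Lfun j x)

lemma csucc_eq {n : ℕ} [NeZero n] (x : Fin n) : csucc x = x + 1 := by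
  ext
  simp only [csucc, Fin.add_def, Fin.val_one']
  rw [Nat.add_mod x.val 1 n, Nat.mod_eq_of_lt x.isLt]

lemma coeff_eq {n : ℕ} [NeZero n] (m s : Fin n) :
    ((s - m).val : ℝ) - ((s + 1 - m).val : ℝ)
      = (if s = m - 1 then (n : ℝ) else 0) - 1 := by
  obtain ⟨k, rfl⟩ : ∃ k, n = k + 1 := ⟨n - 1, by have := NeZero.pos n; omega⟩
  have hsum : s + 1 - m = (s - m) + 1 := by abel
  set a := s - m with ha
  have hiff : s = m - 1 ↔ a + 1 = 0 := by
    constructor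
    · intro h; rw [ha, h]; abel
    · intro h
      have : s - (m - 1) = 0 := by rw [← h, ha]; abel
      have := sub_eq_zero.mp this
      exact this
  rw [hsum]
  by_cases hc : s = m - 1
  · have h0 : a + 1 = 0 := hiff.mp hc
    have hl : a = Fin.last k := by
      by_contra hne
      have := Fin.val_add_one a
      rw [if_neg hne] at this
      have : (a + 1).val = a.val + 1 := this
      rw [h0] at this
      simp at this
    rw [if_pos hc, h0, hl]
    simp only [Fin.val_last, Fin.val_zero, Nat.cast_zero]
    push_cast
    ring
  · have h0 : a + 1 ≠ 0 := fun h => hc (hiff.mpr h)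
    have hl : a ≠ Fin.last k := fun hla => h0 (by rw [hla]; exact Fin.last_add_one k)
    have hv : (a + 1).val = a.val + 1 := by
      have := Fin.val_add_one a
      rwa [if_neg hl] at this
    rw [if_neg hc, hv]
    push_cast
    ring

lemma lfun_eq {n : ℕ} [NeZero n] (t : Fin n → ℝ) (x : Fin n → ℝ)
    (hx : ∀ i, x i = t i - t (i - 1)) (m : Fin n) :
    Lfun m x = n * t (m - 1) - ∑ s, t s := by
  have h1 : Lfun m x = ∑ s : Fin n, ((s - m).val : ℝ) * (t s - t (s - 1)) := by
    rw [Lfun]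
    apply Fintype.sum_equiv (Equiv.addLeft m)
    intro r
    simp [hx, add_sub_cancel_left]
  have h2 : ∑ s : Fin n, ((s - m).val : ℝ) * t (s - 1)
      = ∑ s : Fin n, ((s + 1 - m).val : ℝ) * t s := by
    apply Fintype.sum_equiv (Equiv.subRight (1 : Fin n))
    intro r
    simp [sub_add_cancel]
  rw [h1]
  simp only [mul_sub, Finset.sum_sub_distrib, h2]
  rw [← Finset.sum_sub_distrib]
  have h3 : ∀ s : Fin n, ((s - m).val : ℝ) * t s - ((s + 1 - m).val : ℝ) * t s
      = ((if s = m - 1 then (n : ℝ) else 0) - 1) * t s := by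
    intro s
    rw [← sub_mul, coeff_eq]
  simp only [h3, sub_mul, ite_mul, zero_mul, one_mul, Finset.sum_sub_distrib,
    Finset.sum_ite_eq', Finset.mem_univ, if_true]

/-- if `t_1, …, t_n ≥ 0`, `t_j = 0`, and
`x = Σ_i t_i (e_i − e_{i+1})`, then `L_{j+1}(x) ≤ L_m(x)` for every `m`, and
consequently `h(x) = L_{j+1}(x)`; i.e. `h` is linear on the cone `Π_j`. -/
theorem stmt2 {n : ℕ} (hn : 1 ≤ n) (t : Fin n → ℝ) (ht : ∀ i, 0 ≤ t i)
    (j : Fin n) (htj : t j = 0) (x : Fin n → ℝ)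
    (hx : ∀ i, x i = ∑ m : Fin n, t m *
      ((if i = m then 1 else 0) - (if i = csucc m then 1 else 0))) :
    (∀ m : Fin n, Lfun (csucc j) x ≤ Lfun m x) ∧ hfun x = Lfun (csucc j) x := by
  haveI : NeZero n := ⟨by omega⟩
  have hx' : ∀ i, x i = t i - t (i - 1) := by
    intro i
    rw [hx i]
    have key : ∀ m : Fin n, (if i = csucc m then (1:ℝ) else 0)
        = (if i - 1 = m then 1 else 0) := by
      intro m
      rw [csucc_eq]
      congr 1
      simp only [eq_iff_iff]
      exact ⟨fun h => by rw [h]; abel, fun h => by rw [← h]; abel⟩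
    simp only [key, mul_sub, Finset.sum_sub_distrib, mul_ite, mul_one, mul_zero,
      Finset.sum_ite_eq, Finset.mem_univ, if_true]
  have key : ∀ m : Fin n, Lfun m x = n * t (m - 1) - ∑ s, t s :=
    lfun_eq t x hx'
  have hsucc : Lfun (csucc j) x = - ∑ s, t s := by
    rw [csucc_eq, key, add_sub_cancel_right, htj]
    ring
  have h1 : ∀ m : Fin n, Lfun (csucc j) x ≤ Lfun m x := by
    intro m
    rw [hsucc, key]
    have : (0:ℝ) ≤ n * t (m - 1) := mul_nonneg (Nat.cast_nonneg n) (ht _)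
    linarith
  refine ⟨h1, ?_⟩
  apply IsLeast.csInf_eq
  constructor
  · exact ⟨csucc j, rfl⟩
  · rintro _ ⟨m, rfl⟩
    exact h1 m
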